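/- Let T be a spanning tree of a finite vertex set V, let 𝒫 be a partition of V with s blocks, and suppose the edge set of T is partitioned into classes A_1, …, A_m, where for each j there is a finset e_j ⊆ V with |e_j| ≥ 2 such that every edge in A_j has both endpoints in e_j. Then s − 1 ≤ Σ_{j=1}^{m} (p_𝒫(e_j) − 1), where p_𝒫(e_j) is the number of blocks of 𝒫 meeting e_j. -/

import Mathlib

open scoped Classical
noncomputable section

variable {W : Type*}

/-- `A` is the edge set of a tree with vertex set `e`: no loops, all endpoints in `e`,
acyclic, and any two vertices of `e` are connected. -/
def IsTreeOn (e : Finset W) (A : Finset (Sym2 W)) : Prop :=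
  (∀ s ∈ A, ¬ s.IsDiag) ∧
  (∀ s ∈ A, ∀ v ∈ s, v ∈ e) ∧
  (SimpleGraph.fromEdgeSet (A : Set (Sym2 W))).IsAcyclic ∧
  (∀ x ∈ e, ∀ y ∈ e, (SimpleGraph.fromEdgeSet (A : Set (Sym2 W))).Reachable x y)

/-- Number of blocks of the partition `P` that meet `e`. -/
def pblocks [DecidableEq W] {U : Finset W} (P : Finpartition U) (e : Finset W) : ℕ :=
  (P.parts.filter fun B => (B ∩ e).Nonempty).card

/-- Number of edges in `A` whose two endpoints lie in distinct blocks of `P`. -/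
def crossEdges [DecidableEq W] {U : Finset W} (P : Finpartition U) (A : Finset (Sym2 W)) : ℕ :=
  (A.filter fun s => ∀ B ∈ P.parts, ¬ (∀ v ∈ s, v ∈ B)).card

/-- `k`-weak partition connectivity of the multihypergraph with vertex set `U`
and hyperedge family `E`. -/
def WeaklyPC [DecidableEq W] {ι : Type*} [Fintype ι] (U : Finset W)
    (E : ι → Finset W) (k : ℕ) : Prop :=
  ∀ P : Finpartition U, k * (P.parts.card - 1) ≤ ∑ i, (pblocks P (E i) - 1)

/-- The labelled edge set of the tree assignment `F`: each graph edge is tagged by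
the hyperedge occurrence producing it. -/
def LEdges [DecidableEq W] {ι : Type*} [Fintype ι] [DecidableEq ι]
    (F : ι → Finset (Sym2 W)) : Finset (ι × Sym2 W) :=
  Finset.univ.biUnion fun i => (F i).image fun s => (i, s)

/-- An (ordered) `k`-tree decomposition of the labelled union of the tree assignment `F`:
each labelled edge gets a layer, and the labelled edges of each layer are (bijectively)
the edge set of a spanning tree of `U`. -/
structure KTreeDecomp [DecidableEq W] {ι : Type*} [Fintype ι] [DecidableEq ι]
    (U : Finset W) (F : ι → Finset (Sym2 W)) (k : ℕ) where
  layer : ι × Sym2 W → Fin k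
  tree : Fin k → Finset (Sym2 W)
  tree_isTree : ∀ j, IsTreeOn U (tree j)
  tree_eq : ∀ j, tree j = ((LEdges F).filter fun p => layer p = j).image Prod.snd
  layer_inj : ∀ p ∈ LEdges F, ∀ q ∈ LEdges F, layer p = layer q → p.2 = q.2 → p = q

/-- The signature of a `k`-tree decomposition: `sig D e = ∑ i, i • |E(T_i) ∩ E(F_e)|`. -/
def sig [DecidableEq W] {ι : Type*} [Fintype ι] [DecidableEq ι] {U : Finset W}
    {F : ι → Finset (Sym2 W)} {k : ℕ} (D : KTreeDecomp U F k) (i : ι) : ℕ :=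
  ∑ j : Fin k, j.1 * ((F i).filter fun s => D.layer (i, s) = j).card

/-- `H = (U, E)` has a `k`-distinguishable tree assignment. -/
def Distinguishable [DecidableEq W] {ι : Type*} [Fintype ι] [DecidableEq ι]
    (U : Finset W) (E : ι → Finset W) (k : ℕ) : Prop :=
  ∃ F : ι → Finset (Sym2 W), (∀ i, IsTreeOn (E i) (F i)) ∧
    ∃ D : KTreeDecomp U F k, ∀ D' : KTreeDecomp U F k,
      (∀ i, sig D' i = sig D i) → ∀ p ∈ LEdges F, D'.layer p = D.layer p

/-- The star on `e` centered at `c`. -/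
def starOn [DecidableEq W] (e : Finset W) (c : W) : Finset (Sym2 W) :=
  (e.erase c).image fun u => s(c, u)

namespace Stmt9Aux

open SimpleGraph

lemma reach_del {α : Type*} (G : SimpleGraph α) {u v : α}
    (h : (G \ fromEdgeSet {s(u,v)}).Reachable u v) :
    ∀ {a b : α}, G.Reachable a b → (G \ fromEdgeSet {s(u,v)}).Reachable a b := by
  intro a b hab
  obtain ⟨p⟩ := hab
  induction p with
  | nil => rfl
  | @cons x z y hadj q ih =>
    by_cases he : s(x, z) = s(u, v)
    · rcases Sym2.eq_iff.mp he with ⟨rfl, rfl⟩ | ⟨rfl, rfl⟩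
      · exact h.trans ih
      · exact h.symm.trans ih
    · have hxz : (G \ fromEdgeSet {s(u,v)}).Adj x z := by
        rw [sdiff_adj]
        refine ⟨hadj, ?_⟩
        rw [fromEdgeSet_adj]
        rintro ⟨hmem, -⟩
        exact he hmem
      exact hxz.reachable.trans ih

lemma conn_card_bound {α : Type*} [Fintype α] :
    ∀ (n : ℕ) (G : SimpleGraph α), G.Connected → G.edgeFinset.card = n →
      Fintype.card α ≤ n + 1 := by
  intro n
  induction n using Nat.strong_induction_on with
  | _ n ih =>
    intro G hG hcard
    by_cases hac : G.IsAcyclic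
    · have ht : G.IsTree := ⟨hG, hac⟩
      have := ht.card_edgeFinset
      omega
    · rw [isAcyclic_iff_forall_edge_isBridge] at hac
      push_neg at hac
      obtain ⟨f, hf, hnb⟩ := hac
      revert hf hnb
      induction f using Sym2.ind with
      | _ u v =>
        intro hf hnb
        rw [isBridge_iff] at hnb
        push_neg at hnb
        rw [mem_edgeSet] at hf
        have hreach : (G \ fromEdgeSet {s(u,v)}).Reachable u v := hnb
        set G' := G \ fromEdgeSet {s(u,v)} with hG'def
        have hne : Nonempty α := hG.nonempty
        have hG' : G'.Connected := ⟨fun a b => reach_del G hreach (hG.preconnected a b)⟩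
        have hE' : G'.edgeFinset = G.edgeFinset.erase s(u,v) := by
          ext g
          simp only [mem_edgeFinset, Set.mem_toFinset, Finset.mem_erase, hG'def, edgeSet_sdiff,
            Set.mem_diff, edgeSet_fromEdgeSet, Set.mem_diff, Set.mem_singleton_iff,
            Set.mem_setOf_eq]
          constructor
          · rintro ⟨hg, hg2⟩
            refine ⟨fun hgg => hg2 ⟨hgg, ?_⟩, hg⟩
            subst hgg
            exact G.not_isDiag_of_mem_edgeSet hg
          · rintro ⟨hne, hg⟩
            exact ⟨hg, fun ⟨h1, _⟩ => hne h1⟩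
        have hmem : s(u,v) ∈ G.edgeFinset := by
          rw [mem_edgeFinset, mem_edgeSet]; exact hf
        have hn : 1 ≤ n := hcard ▸ Finset.card_pos.mpr ⟨_, hmem⟩
        have hcard' : G'.edgeFinset.card = n - 1 := by
          rw [hE', Finset.card_erase_of_mem hmem, hcard]
        have := ih (n - 1) (by omega) G' hG'
          (by convert hcard' using 3 <;> first | rfl | exact Subsingleton.elim _ _)
        omega

end Stmt9Aux

/-- layer quotient rank.  If the edge set of a spanning tree `T` of `V`
is partitioned into classes `A₁, …, A_m` with the edges of `A_j` having both endpoints in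
`e_j` (`|e_j| ≥ 2`), then for any partition `𝒫` of `V` with `s` blocks,
`s - 1 ≤ ∑_j (p_𝒫(e_j) - 1)`. -/
theorem stmt9 {V : Type*} [Fintype V] [DecidableEq V]
    (P : Finpartition (Finset.univ : Finset V))
    (T : Finset (Sym2 V)) (hT : IsTreeOn (Finset.univ : Finset V) T)
    (m : ℕ) (A : Fin m → Finset (Sym2 V)) (e : Fin m → Finset V)
    (he : ∀ j, 2 ≤ (e j).card)
    (hsub : ∀ j, ∀ s ∈ A j, ∀ v ∈ s, v ∈ e j)
    (hdisj : ∀ j j', j ≠ j' → Disjoint (A j) (A j'))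
    (hcover : T = Finset.univ.biUnion A) :
    P.parts.card - 1 ≤ ∑ j, (pblocks P (e j) - 1) := by
  classical
  by_cases hs : P.parts.card = 0
  · simp [hs]
  have hspos : 0 < P.parts.card := Nat.pos_of_ne_zero hs
  obtain ⟨B₀, hB₀⟩ := Finset.card_pos.mp hspos
  -- block function
  have hblk : ∀ x : V, ∃ B, B ∈ P.parts ∧ x ∈ B := by
    intro x
    obtain ⟨B, hB, hxB⟩ := P.exists_mem (Finset.mem_univ x)
    exact ⟨B, hB, hxB⟩
  choose blk blkmem blkin using hblk
  -- the bipartite incidence graph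
  set rel : (↥P.parts ⊕ Fin m) → (↥P.parts ⊕ Fin m) → Prop :=
    fun a b => ∃ (B : ↥P.parts) (j : Fin m),
      a = Sum.inl B ∧ b = Sum.inr j ∧ ((B : Finset V) ∩ e j).Nonempty with hrel
  set H : SimpleGraph (↥P.parts ⊕ Fin m) := SimpleGraph.fromRel rel with hH
  have hadjBj : ∀ (B : ↥P.parts) (j : Fin m), ((B : Finset V) ∩ e j).Nonempty →
      H.Adj (Sum.inl B) (Sum.inr j) := by
    intro B j hne
    rw [hH, SimpleGraph.fromRel_adj]
    exact ⟨by simp, Or.inl ⟨B, j, rfl, rfl, hne⟩⟩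
  -- reachability in H along a walk in the tree
  have key : ∀ (x y : V) (w : (SimpleGraph.fromEdgeSet (T : Set (Sym2 V))).Walk x y),
      H.Reachable (Sum.inl ⟨blk x, blkmem x⟩) (Sum.inl ⟨blk y, blkmem y⟩) := by
    intro x y w
    induction w with
    | nil => exact SimpleGraph.Reachable.refl _
    | @cons x z y hadj q ih =>
      rw [SimpleGraph.fromEdgeSet_adj] at hadj
      obtain ⟨hmemT, hne⟩ := hadj
      rw [hcover] at hmemT
      obtain ⟨j, -, hmemA⟩ := Finset.mem_biUnion.mp hmemT
      have hxe : x ∈ e j := hsub j _ hmemA x (Sym2.mem_mk_left x z)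
      have hze : z ∈ e j := hsub j _ hmemA z (Sym2.mem_mk_right x z)
      have h1 : H.Adj (Sum.inl ⟨blk x, blkmem x⟩) (Sum.inr j) :=
        hadjBj _ j ⟨x, Finset.mem_inter.mpr ⟨blkin x, hxe⟩⟩
      have h2 : H.Adj (Sum.inl ⟨blk z, blkmem z⟩) (Sum.inr j) :=
        hadjBj _ j ⟨z, Finset.mem_inter.mpr ⟨blkin z, hze⟩⟩
      exact (h1.reachable.trans h2.symm.reachable).trans ih
  have hblkeq : ∀ (x : V) (B : Finset V), B ∈ P.parts → x ∈ B → blk x = B := by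
    intro x B hB hxB
    exact P.eq_of_mem_parts (blkmem x) hB (blkin x) hxB
  -- H is connected
  have toBlk : ∀ a : ↥P.parts ⊕ Fin m, ∃ B : ↥P.parts, H.Reachable a (Sum.inl B) := by
    rintro (B | j)
    · exact ⟨B, SimpleGraph.Reachable.refl _⟩
    · obtain ⟨x, hx⟩ := Finset.card_pos.mp (lt_of_lt_of_le (by norm_num) (he j))
      exact ⟨⟨blk x, blkmem x⟩,
        (hadjBj ⟨blk x, blkmem x⟩ j ⟨x, Finset.mem_inter.mpr ⟨blkin x, hx⟩⟩).symm.reachable⟩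
  have hconn : H.Connected := by
    have hne : Nonempty (↥P.parts ⊕ Fin m) := ⟨Sum.inl ⟨B₀, hB₀⟩⟩
    refine ⟨fun a b => ?_⟩
    obtain ⟨B, hB⟩ := toBlk a
    obtain ⟨C, hC⟩ := toBlk b
    obtain ⟨x, hx⟩ := P.nonempty_of_mem_parts B.2
    obtain ⟨y, hy⟩ := P.nonempty_of_mem_parts C.2
    obtain ⟨w⟩ := hT.2.2.2 x (Finset.mem_univ x) y (Finset.mem_univ y)
    have hkey := key x y w
    have hBx : (⟨blk x, blkmem x⟩ : ↥P.parts) = B := Subtype.ext (hblkeq x B B.2 hx)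
    have hCy : (⟨blk y, blkmem y⟩ : ↥P.parts) = C := Subtype.ext (hblkeq y C C.2 hy)
    rw [hBx, hCy] at hkey
    exact (hB.trans hkey).trans hC.symm
  -- counting edges of H
  set Pairs : Finset (↥P.parts × Fin m) :=
    Finset.univ.filter (fun p => ((p.1 : Finset V) ∩ e p.2).Nonempty) with hPairs
  have himg : H.edgeFinset ⊆ Pairs.image (fun p => s(Sum.inl p.1, Sum.inr p.2)) := by
    intro f hf
    rw [SimpleGraph.mem_edgeFinset] at hf
    revert hf
    induction f using Sym2.ind with
    | _ a b =>
      intro hf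
      rw [SimpleGraph.mem_edgeSet, hH, SimpleGraph.fromRel_adj] at hf
      obtain ⟨-, (⟨B, j, rfl, rfl, hne⟩ | ⟨B, j, rfl, rfl, hne⟩)⟩ := hf
      · exact Finset.mem_image.mpr ⟨(B, j), Finset.mem_filter.mpr ⟨Finset.mem_univ _, hne⟩, rfl⟩
      · exact Finset.mem_image.mpr ⟨(B, j), Finset.mem_filter.mpr ⟨Finset.mem_univ _, hne⟩,
          Sym2.eq_swap⟩
  have hPairscard : Pairs.card = ∑ j : Fin m, pblocks P (e j) := by
    rw [hPairs, Finset.card_filter]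
    rw [Fintype.sum_prod_type]
    rw [Finset.sum_comm]
    refine Finset.sum_congr rfl fun j _ => ?_
    rw [pblocks, Finset.card_filter, ← Finset.sum_coe_sort P.parts]
  have hedgebound : H.edgeFinset.card ≤ ∑ j : Fin m, pblocks P (e j) := by
    calc H.edgeFinset.card ≤ (Pairs.image (fun p => s(Sum.inl p.1, Sum.inr p.2))).card :=
          Finset.card_le_card himg
      _ ≤ Pairs.card := Finset.card_image_le
      _ = _ := hPairscard
  -- vertex count
  have hvert : Fintype.card (↥P.parts ⊕ Fin m) = P.parts.card + m := by
    simp [Fintype.card_sum]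
  have hmain := Stmt9Aux.conn_card_bound H.edgeFinset.card H hconn rfl
  rw [hvert] at hmain
  -- each pblocks is at least 1
  have hp1 : ∀ j : Fin m, 1 ≤ pblocks P (e j) := by
    intro j
    obtain ⟨x, hx⟩ := Finset.card_pos.mp (lt_of_lt_of_le (by norm_num) (he j))
    refine Finset.card_pos.mpr ⟨blk x, Finset.mem_filter.mpr ⟨blkmem x, x,
      Finset.mem_inter.mpr ⟨blkin x, hx⟩⟩⟩
  have hsum : ∑ j : Fin m, (pblocks P (e j) - 1) + m = ∑ j : Fin m, pblocks P (e j) := by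
    rw [← Finset.sum_add_distrib.symm.trans (Finset.sum_congr rfl
      fun j _ => Nat.sub_add_cancel (hp1 j))]
    simp [Finset.sum_add_distrib, Finset.card_univ]
  omega

end
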